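/- Let Â₀, Â₁ be bounded self-adjoint operators on a complex Hilbert space and φ a unit vector. Then Var(Â₀)·Var(Â₁) ≥ (½⟨{Â₀,Â₁}⟩ - ⟨Â₀⟩⟨Â₁⟩)² + (1/(2i)·⟨[Â₀,Â₁]⟩)², where {X,Y} = XY + YX, [X,Y] = XY - YX, ⟨X̂⟩ = ⟨φ, X̂φ⟩ and Var(X̂) = ⟨X̂²⟩ - ⟨X̂⟩². -/

import Mathlib

theorem stmt_5 {H : Type*} [NormedAddCommGroup H] [InnerProductSpace ℂ H] [CompleteSpace H]
    (A₀ A₁ : H →L[ℂ] H) (hA₀ : IsSelfAdjoint A₀) (hA₁ : IsSelfAdjoint A₁)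
    (φ : H) (hφ : ‖φ‖ = 1) :
    ((inner ℂ φ ((A₀ * A₀) φ) : ℂ).re - ((inner ℂ φ (A₀ φ) : ℂ).re) ^ 2) *
      ((inner ℂ φ ((A₁ * A₁) φ) : ℂ).re - ((inner ℂ φ (A₁ φ) : ℂ).re) ^ 2) ≥
    ((1 / 2) * (inner ℂ φ ((A₀ * A₁ + A₁ * A₀) φ) : ℂ).re -
        (inner ℂ φ (A₀ φ) : ℂ).re * (inner ℂ φ (A₁ φ) : ℂ).re) ^ 2 +
      (((inner ℂ φ ((A₀ * A₁ - A₁ * A₀) φ) : ℂ) / (2 * Complex.I)).re) ^ 2 := by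
  set α : ℝ := (inner ℂ φ (A₀ φ) : ℂ).re with hα
  set β : ℝ := (inner ℂ φ (A₁ φ) : ℂ).re with hβ
  set ψ₀ : H := A₀ φ - (α : ℂ) • φ with hψ₀
  set ψ₁ : H := A₁ φ - (β : ℂ) • φ with hψ₁
  have hφφ : (inner ℂ φ φ : ℂ) = 1 := by
    rw [inner_self_eq_norm_sq_to_K, hφ]; norm_num
  have hs₀ : ∀ x y : H, (inner ℂ (A₀ x) y : ℂ) = inner ℂ x (A₀ y) := fun x y => hA₀.isSymmetric x y
  have hs₁ : ∀ x y : H, (inner ℂ (A₁ x) y : ℂ) = inner ℂ x (A₁ y) := fun x y => hA₁.isSymmetric x y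
  have hr₀ : (inner ℂ φ (A₀ φ) : ℂ) = (α : ℂ) := by
    have h : starRingEnd ℂ (inner ℂ φ (A₀ φ) : ℂ) = inner ℂ φ (A₀ φ) := by
      rw [inner_conj_symm, hs₀]
    exact (Complex.conj_eq_iff_re.mp h).symm
  have hr₁ : (inner ℂ φ (A₁ φ) : ℂ) = (β : ℂ) := by
    have h : starRingEnd ℂ (inner ℂ φ (A₁ φ) : ℂ) = inner ℂ φ (A₁ φ) := by
      rw [inner_conj_symm, hs₁]
    exact (Complex.conj_eq_iff_re.mp h).symm
  set w : ℂ := inner ℂ φ ((A₀ * A₁) φ) with hw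
  have hz : (inner ℂ ψ₀ ψ₁ : ℂ) = w - ((α * β : ℝ) : ℂ) := by
    simp only [hψ₀, hψ₁, hw, ContinuousLinearMap.mul_apply, inner_sub_left, inner_sub_right,
      inner_smul_left, inner_smul_right, Complex.conj_ofReal, hφφ, hs₀, hr₀, hr₁]
    push_cast
    ring
  have hn₀ : ‖ψ₀‖ ^ 2 = (inner ℂ φ ((A₀ * A₀) φ) : ℂ).re - α ^ 2 := by
    have h : (inner ℂ ψ₀ ψ₀ : ℂ) = inner ℂ φ ((A₀ * A₀) φ) - ((α ^ 2 : ℝ) : ℂ) := by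
      simp only [hψ₀, ContinuousLinearMap.mul_apply, inner_sub_left, inner_sub_right,
        inner_smul_left, inner_smul_right, Complex.conj_ofReal, hφφ, hs₀, hr₀]
      push_cast
      ring
    rw [norm_sq_eq_re_inner (𝕜 := ℂ) ψ₀, h]
    simp [← Complex.ofReal_pow]
  have hn₁ : ‖ψ₁‖ ^ 2 = (inner ℂ φ ((A₁ * A₁) φ) : ℂ).re - β ^ 2 := by
    have h : (inner ℂ ψ₁ ψ₁ : ℂ) = inner ℂ φ ((A₁ * A₁) φ) - ((β ^ 2 : ℝ) : ℂ) := by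
      simp only [hψ₁, ContinuousLinearMap.mul_apply, inner_sub_left, inner_sub_right,
        inner_smul_left, inner_smul_right, Complex.conj_ofReal, hφφ, hs₁, hr₁]
      push_cast
      ring
    rw [norm_sq_eq_re_inner (𝕜 := ℂ) ψ₁, h]
    simp [← Complex.ofReal_pow]
  have hconj : (inner ℂ φ ((A₁ * A₀) φ) : ℂ) = starRingEnd ℂ w := by
    rw [hw, inner_conj_symm]
    simp only [ContinuousLinearMap.mul_apply, hs₀, hs₁]
  have hterm1 : (1 / 2 : ℝ) * (inner ℂ φ ((A₀ * A₁ + A₁ * A₀) φ) : ℂ).re - α * β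
      = w.re - α * β := by
    have h : (inner ℂ φ ((A₀ * A₁ + A₁ * A₀) φ) : ℂ) = w + starRingEnd ℂ w := by
      rw [ContinuousLinearMap.add_apply, inner_add_right, hconj, hw]
    rw [h]
    simp [Complex.add_re, Complex.conj_re]
    ring
  have hterm2 : ((inner ℂ φ ((A₀ * A₁ - A₁ * A₀) φ) : ℂ) / (2 * Complex.I)).re = w.im := by
    have h1 : (inner ℂ φ ((A₀ * A₁ - A₁ * A₀) φ) : ℂ) = w - starRingEnd ℂ w := by
      rw [ContinuousLinearMap.sub_apply, inner_sub_right, hconj, hw]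
    have h2 : w - starRingEnd ℂ w = ((2 * w.im : ℝ) : ℂ) * Complex.I := by
      apply Complex.ext <;> simp <;> ring
    have h3 : ((2 * w.im : ℝ) : ℂ) * Complex.I / (2 * Complex.I) = ((w.im : ℝ) : ℂ) := by
      have hI : Complex.I ≠ 0 := Complex.I_ne_zero
      field_simp
      push_cast
      ring
    rw [h1, h2, h3, Complex.ofReal_re]
  have hCS : ‖(inner ℂ ψ₀ ψ₁ : ℂ)‖ ≤ ‖ψ₀‖ * ‖ψ₁‖ := norm_inner_le_norm ψ₀ ψ₁
  have hzre : (inner ℂ ψ₀ ψ₁ : ℂ).re = w.re - α * β := by rw [hz]; simp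
  have hzim : (inner ℂ ψ₀ ψ₁ : ℂ).im = w.im := by rw [hz]; simp
  have hnormsq : ‖(inner ℂ ψ₀ ψ₁ : ℂ)‖ ^ 2 = (w.re - α * β) ^ 2 + w.im ^ 2 := by
    rw [Complex.sq_norm, Complex.normSq_apply, hzre, hzim]
    ring
  have key : (w.re - α * β) ^ 2 + w.im ^ 2 ≤ ‖ψ₀‖ ^ 2 * ‖ψ₁‖ ^ 2 := by
    rw [← hnormsq]
    calc ‖(inner ℂ ψ₀ ψ₁ : ℂ)‖ ^ 2 ≤ (‖ψ₀‖ * ‖ψ₁‖) ^ 2 :=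
          pow_le_pow_left₀ (norm_nonneg _) hCS 2
      _ = ‖ψ₀‖ ^ 2 * ‖ψ₁‖ ^ 2 := by ring
  rw [ge_iff_le, hterm2]
  calc ((1:ℝ)/2 * (inner ℂ φ ((A₀ * A₁ + A₁ * A₀) φ) : ℂ).re - α * β) ^ 2 + w.im ^ 2
      = (w.re - α * β) ^ 2 + w.im ^ 2 := by rw [← hterm1]
    _ ≤ ‖ψ₀‖ ^ 2 * ‖ψ₁‖ ^ 2 := key
    _ = _ := by rw [hn₀, hn₁]
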